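/- Let a, b be real numbers with b > 0 and a·b > 1/4. Then the logarithmic index of increase of the sequence D equals log 2; that is, the limit as n → ∞ of (1/n)·log(log D(n)) equals log 2. -/

import Mathlib

set_option maxHeartbeats 1000000 in
theorem stmt_7 (a b : ℝ) (hb : 0 < b) (hab : a * b > 1/4)
    (D : ℕ → ℝ) (hD0 : D 0 = 1) (hD : ∀ n, D (n + 1) = a + b * D n ^ 2) :
    Filter.Tendsto (fun n : ℕ => (1 / (n : ℝ)) * Real.log (Real.log (D n)))
      Filter.atTop (nhds (Real.log 2)) := by
  set c := a * b with hcdef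
  have hc : 0 < c := by rw [hcdef]; linarith
  set x : ℕ → ℝ := fun n => b * D n with hxdef
  have hx0 : x 0 = b := by simp [hxdef, hD0]
  have hxrec : ∀ n, x (n + 1) = x n ^ 2 + c := by
    intro n
    simp only [hxdef, hD n, hcdef]
    ring
  have hstep : ∀ n, x n + (c - 1/4) ≤ x (n + 1) := by
    intro n
    rw [hxrec n]
    nlinarith [sq_nonneg (x n - 1/2)]
  have hδ : (0:ℝ) < c - 1/4 := by rw [hcdef]; linarith
  have hmono : Monotone x := monotone_nat_of_le_succ fun n => by
    have := hstep n; linarith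
  have hpos : ∀ n, 0 < x n := by
    intro n
    induction n with
    | zero => rw [hx0]; exact hb
    | succ m ih => rw [hxrec m]; nlinarith
  have hgrow : ∀ n : ℕ, b + n * (c - 1/4) ≤ x n := by
    intro n
    induction n with
    | zero => simp [hx0]
    | succ m ih =>
      have := hstep m
      push_cast
      push_cast at ih
      linarith
  set M : ℝ := 2 + c + b^2 + 1/b with hMdef
  have hib : (0:ℝ) < 1/b := by positivity
  have hM2 : (2:ℝ) ≤ M := by rw [hMdef]; nlinarith
  have hMc : c ≤ M := by rw [hMdef]; nlinarith
  have hMb2 : b^2 ≤ M := by rw [hMdef]; nlinarith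
  have hMib : 1/b ≤ M := by rw [hMdef]; nlinarith
  obtain ⟨N, hN⟩ := exists_nat_ge (M / (c - 1/4))
  have hxN : M ≤ x N := by
    rw [div_le_iff₀ hδ] at hN
    calc M ≤ ↑N * (c - 1/4) := hN
      _ ≤ b + ↑N * (c - 1/4) := by linarith
      _ ≤ x N := hgrow N
  have hxge : ∀ n, N ≤ n → M ≤ x n := fun n hn => le_trans hxN (hmono hn)
  set L0 : ℝ := Real.log (x N) with hL0def
  have hlog2pos : (0:ℝ) < Real.log 2 := Real.log_pos (by norm_num)
  have hL0 : Real.log 2 ≤ L0 := by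
    rw [hL0def]
    exact Real.log_le_log (by norm_num) (by linarith [hxge N le_rfl])
  have hL0pos : 0 < L0 := lt_of_lt_of_le hlog2pos hL0
  -- lower bound for log (x (N+k))
  have hlow : ∀ k : ℕ, 2^k * L0 ≤ Real.log (x (N + k)) := by
    intro k
    induction k with
    | zero => simp [hL0def]
    | succ m ih =>
      have hx1 : x (N + m) ^ 2 ≤ x (N + m + 1) := by
        rw [hxrec]; linarith
      have h1 : Real.log (x (N + m) ^ 2) ≤ Real.log (x (N + m + 1)) :=
        Real.log_le_log (pow_pos (hpos _) 2) hx1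
      rw [Real.log_pow] at h1
      push_cast at h1
      have : (2:ℝ)^(m+1) * L0 = 2 * (2^m * L0) := by ring
      rw [show N + (m + 1) = N + m + 1 from rfl, this]
      nlinarith
  -- upper bound for log (x (N+k))
  have hup : ∀ k : ℕ, Real.log (x (N + k)) + Real.log 2 ≤ 2^k * (L0 + Real.log 2) := by
    intro k
    induction k with
    | zero => simp [hL0def]
    | succ m ih =>
      have hxm : M ≤ x (N + m) := hxge _ (Nat.le_add_right N m)
      have hx1 : x (N + m + 1) ≤ 2 * x (N + m) ^ 2 := by
        rw [hxrec]
        nlinarith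
      have h1 : Real.log (x (N + m + 1)) ≤ Real.log (2 * x (N + m) ^ 2) :=
        Real.log_le_log (hpos _) hx1
      have h2 : Real.log (2 * x (N + m) ^ 2) = Real.log 2 + 2 * Real.log (x (N + m)) := by
        rw [Real.log_mul (by norm_num) (pow_ne_zero 2 (ne_of_gt (hpos _))), Real.log_pow]
        push_cast
        ring
      rw [show N + (m + 1) = N + m + 1 from rfl]
      have : (2:ℝ)^(m+1) * (L0 + Real.log 2) = 2 * (2^m * (L0 + Real.log 2)) := by ring
      rw [this]
      linarith
  -- translate to D
  have hbne : b ≠ 0 := ne_of_gt hb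
  have hDx : ∀ n, D n = x n / b := by
    intro n
    rw [hxdef]
    field_simp
  have hDlog : ∀ n, Real.log (D n) = Real.log (x n) - Real.log b := by
    intro n
    rw [hDx n, Real.log_div (ne_of_gt (hpos n)) hbne]
  -- bounds on log (D n), for n ≥ N
  have hDlow : ∀ k : ℕ, 2^k * (L0 / 2) ≤ Real.log (D (N + k)) := by
    intro k
    have hxn : M ≤ x (N + k) := hxge _ (Nat.le_add_right N k)
    have hlogb : 2 * Real.log b ≤ Real.log (x (N + k)) := by
      have : Real.log (b ^ 2) ≤ Real.log (x (N + k)) :=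
        Real.log_le_log (by positivity) (by linarith)
      rw [Real.log_pow] at this
      push_cast at this
      linarith
    have := hlow k
    rw [hDlog]
    linarith
  have hDup : ∀ k : ℕ, Real.log (D (N + k)) ≤ 2^k * (2 * (L0 + Real.log 2)) := by
    intro k
    have hxn : M ≤ x (N + k) := hxge _ (Nat.le_add_right N k)
    have hlogb : -Real.log b ≤ Real.log (x (N + k)) := by
      have : Real.log (1/b) ≤ Real.log (x (N + k)) :=
        Real.log_le_log hib (le_trans hMib hxn)
      rw [one_div, Real.log_inv] at this
      linarith
    have h1 := hup k
    rw [hDlog]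
    have hexp : (2:ℝ)^k * (2 * (L0 + Real.log 2)) = 2 * (2^k * (L0 + Real.log 2)) := by ring
    rw [hexp]
    linarith
  -- bounds on log log (D n)
  set C1 : ℝ := Real.log (L0 / 2) with hC1def
  set C2 : ℝ := Real.log (2 * (L0 + Real.log 2)) with hC2def
  have hL02 : (0:ℝ) < L0 / 2 := by linarith
  have hQlow : ∀ k : ℕ, k * Real.log 2 + C1 ≤ Real.log (Real.log (D (N + k))) := by
    intro k
    have h1 : Real.log (2^k * (L0 / 2)) ≤ Real.log (Real.log (D (N + k))) :=
      Real.log_le_log (mul_pos (pow_pos two_pos k) hL02) (hDlow k)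
    rw [Real.log_mul (by positivity) (ne_of_gt hL02), Real.log_pow] at h1
    rw [hC1def]
    push_cast at h1
    linarith
  have hQup : ∀ k : ℕ, Real.log (Real.log (D (N + k))) ≤ k * Real.log 2 + C2 := by
    intro k
    have hDpos : 0 < Real.log (D (N + k)) :=
      lt_of_lt_of_le (mul_pos (pow_pos two_pos k) hL02) (hDlow k)
    have hc2 : (0:ℝ) < 2 * (L0 + Real.log 2) := by linarith
    have h1 : Real.log (Real.log (D (N + k))) ≤ Real.log (2^k * (2 * (L0 + Real.log 2))) :=
      Real.log_le_log hDpos (hDup k)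
    rw [Real.log_mul (by positivity) (ne_of_gt hc2), Real.log_pow] at h1
    rw [hC2def]
    push_cast at h1
    linarith
  set K : ℝ := N * Real.log 2 + |C1| + |C2| with hKdef
  have hKC1 : -C1 ≤ |C1| := neg_le_abs C1
  have hKC2 : C2 ≤ |C2| := le_abs_self C2
  have habs1 : 0 ≤ |C1| := abs_nonneg C1
  have habs2 : 0 ≤ |C2| := abs_nonneg C2
  have hmain : ∀ n : ℕ, N ≤ n →
      n * Real.log 2 - K ≤ Real.log (Real.log (D n)) ∧
      Real.log (Real.log (D n)) ≤ n * Real.log 2 + K := by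
    intro n hn
    obtain ⟨k, rfl⟩ := Nat.exists_eq_add_of_le hn
    have h1 := hQlow k
    have h2 := hQup k
    have hcast : ((N + k : ℕ) : ℝ) = (N : ℝ) + (k : ℝ) := by push_cast; ring
    constructor
    · rw [hcast, hKdef]; nlinarith
    · rw [hcast, hKdef]; nlinarith
  -- final squeeze
  have htend0 : Filter.Tendsto (fun n : ℕ => K / n) Filter.atTop (nhds 0) :=
    tendsto_const_div_atTop_nhds_zero_nat K
  have h1 : Filter.Tendsto (fun n : ℕ => Real.log 2 - K / n) Filter.atTop
      (nhds (Real.log 2)) := by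
    simpa using (tendsto_const_nhds (x := Real.log 2) (f := Filter.atTop)).sub htend0
  have h2 : Filter.Tendsto (fun n : ℕ => Real.log 2 + K / n) Filter.atTop
      (nhds (Real.log 2)) := by
    simpa using (tendsto_const_nhds (x := Real.log 2) (f := Filter.atTop)).add htend0
  refine tendsto_of_tendsto_of_tendsto_of_le_of_le' h1 h2 ?_ ?_
  · filter_upwards [Filter.eventually_ge_atTop (max N 1)] with n hn
    have hnN : N ≤ n := le_trans (le_max_left N 1) hn
    have hn1 : 1 ≤ n := le_trans (le_max_right N 1) hn
    have hnpos : (0:ℝ) < n := by exact_mod_cast hn1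
    have hne : (n:ℝ) ≠ 0 := ne_of_gt hnpos
    have := (hmain n hnN).1
    have heq : Real.log 2 - K / n = (1/(n:ℝ)) * ((n:ℝ) * Real.log 2 - K) := by
      field_simp
    rw [heq]
    apply mul_le_mul_of_nonneg_left this (by positivity)
  · filter_upwards [Filter.eventually_ge_atTop (max N 1)] with n hn
    have hnN : N ≤ n := le_trans (le_max_left N 1) hn
    have hn1 : 1 ≤ n := le_trans (le_max_right N 1) hn
    have hnpos : (0:ℝ) < n := by exact_mod_cast hn1
    have hne : (n:ℝ) ≠ 0 := ne_of_gt hnpos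
    have := (hmain n hnN).2
    have heq : Real.log 2 + K / n = (1/(n:ℝ)) * ((n:ℝ) * Real.log 2 + K) := by
      field_simp
    rw [heq]
    apply mul_le_mul_of_nonneg_left this (by positivity)
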